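/- Let 0<s<1 and let N be an integer with N>2s. Define Φ_{N,s}(γ) := 2^{2s} ( Γ((γ+2s)/2) Γ((N-γ)/2) / ( Γ((N-γ-2s)/2) Γ(γ/2) ) − Γ((N+2s)/4)² / Γ((N-2s)/4)² ) for 0 < γ ≤ (N-2s)/2 and Ψ_{N,s}(γ) := Λ_{N,s} + Φ_{N,s}(γ), extended by Ψ_{N,s}(0) := 0. Then Ψ_{N,s} : [0,(N-2s)/2] → [0, Λ_{N,s}] is strictly increasing and surjective; in particular Ψ_{N,s}((N-2s)/2) = Λ_{N,s} and Ψ_{N,s}(γ) → 0 as γ → 0⁺. -/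

import Mathlib

open MeasureTheory Real Filter

noncomputable section

/-- The best constant in the fractional Hardy inequality:
`Λ_{N,s} = 2^{2s} Γ((N+2s)/4)² / Γ((N-2s)/4)²`. -/
def hardyConst (N : ℕ) (s : ℝ) : ℝ :=
  2 ^ (2 * s) * Real.Gamma (((N : ℝ) + 2 * s) / 4) ^ 2 /
    Real.Gamma (((N : ℝ) - 2 * s) / 4) ^ 2

/-- The ground state correction
`Φ_{N,s}(γ) = 2^{2s} ( Γ((γ+2s)/2)Γ((N-γ)/2) / (Γ((N-γ-2s)/2)Γ(γ/2)) − Γ((N+2s)/4)²/Γ((N-2s)/4)² )`. -/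
def PhiNs (N : ℕ) (s γ : ℝ) : ℝ :=
  2 ^ (2 * s) *
    (Real.Gamma ((γ + 2 * s) / 2) * Real.Gamma (((N : ℝ) - γ) / 2) /
        (Real.Gamma (((N : ℝ) - γ - 2 * s) / 2) * Real.Gamma (γ / 2)) -
      Real.Gamma (((N : ℝ) + 2 * s) / 4) ^ 2 / Real.Gamma (((N : ℝ) - 2 * s) / 4) ^ 2)

/-- `Ψ_{N,s}(γ) = Λ_{N,s} + Φ_{N,s}(γ)` for `γ ≠ 0`, extended by `Ψ_{N,s}(0) = 0`. -/
def PsiNs (N : ℕ) (s γ : ℝ) : ℝ :=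
  if γ = 0 then 0 else hardyConst N s + PhiNs N s γ

open scoped Nat

/- ## auxiliary elementary lemmas -/

private lemma elem_le {s j a₁ a₂ b₂ b₁ : ℝ} (hs : 0 < s) (hj : 0 ≤ j)
    (h0 : 0 < a₁) (h12 : a₁ ≤ a₂) (h23 : a₂ ≤ b₂) (h34 : b₂ ≤ b₁)
    (hsum : a₁ + b₁ = a₂ + b₂) :
    Real.log (a₁+j) - Real.log (a₁+s+j) + (Real.log (b₁+j) - Real.log (b₁+s+j)) ≤
    Real.log (a₂+j) - Real.log (a₂+s+j) + (Real.log (b₂+j) - Real.log (b₂+s+j)) := by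
  have p1 : 0 < a₁ + j := by linarith
  have p2 : 0 < a₂ + j := by linarith
  have p3 : 0 < b₂ + j := by linarith
  have p4 : 0 < b₁ + j := by linarith
  have q1 : 0 < a₁ + s + j := by linarith
  have q2 : 0 < a₂ + s + j := by linarith
  have q3 : 0 < b₂ + s + j := by linarith
  have q4 : 0 < b₁ + s + j := by linarith
  have key : (a₁+j)*(b₁+j) * ((a₂+s+j)*(b₂+s+j)) ≤ (a₂+j)*(b₂+j) * ((a₁+s+j)*(b₁+s+j)) := by
    have hb1 : b₁ = a₂ + b₂ - a₁ := by linarith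
    subst hb1
    nlinarith [mul_nonneg (mul_nonneg (mul_pos hs
        (show (0:ℝ) < a₂ + b₂ + 2*j + s by linarith)).le
        (sub_nonneg.2 h12)) (show (0:ℝ) ≤ b₂ - a₁ by linarith)]
  have hdiv : (a₁+j)*(b₁+j) / ((a₁+s+j)*(b₁+s+j)) ≤ (a₂+j)*(b₂+j) / ((a₂+s+j)*(b₂+s+j)) := by
    rw [div_le_div_iff₀ (by positivity) (by positivity)]
    linarith [key]
  have := Real.log_le_log (by positivity) hdiv
  rw [Real.log_div (by positivity) (by positivity), Real.log_div (by positivity) (by positivity),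
    Real.log_mul p1.ne' p4.ne', Real.log_mul q1.ne' q4.ne',
    Real.log_mul p2.ne' p3.ne', Real.log_mul q2.ne' q3.ne'] at this
  linarith

private lemma elem_lt {s a₁ a₂ b₂ b₁ : ℝ} (hs : 0 < s)
    (h0 : 0 < a₁) (h12 : a₁ < a₂) (h23 : a₂ ≤ b₂) (h34 : b₂ < b₁)
    (hsum : a₁ + b₁ = a₂ + b₂) :
    Real.log a₁ - Real.log (a₁+s) + (Real.log b₁ - Real.log (b₁+s)) <
    Real.log a₂ - Real.log (a₂+s) + (Real.log b₂ - Real.log (b₂+s)) := by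
  have p1 : 0 < a₁ := h0
  have p2 : 0 < a₂ := by linarith
  have p3 : 0 < b₂ := by linarith
  have p4 : 0 < b₁ := by linarith
  have q1 : 0 < a₁ + s := by linarith
  have q2 : 0 < a₂ + s := by linarith
  have q3 : 0 < b₂ + s := by linarith
  have q4 : 0 < b₁ + s := by linarith
  have key : a₁*b₁ * ((a₂+s)*(b₂+s)) < a₂*b₂ * ((a₁+s)*(b₁+s)) := by
    have hb1 : b₁ = a₂ + b₂ - a₁ := by linarith
    subst hb1
    nlinarith [mul_pos (mul_pos (mul_pos hs
        (show (0:ℝ) < a₂ + b₂ + s by linarith))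
        (sub_pos.2 h12)) (show (0:ℝ) < b₂ - a₁ by linarith)]
  have hdiv : a₁*b₁ / ((a₁+s)*(b₁+s)) < a₂*b₂ / ((a₂+s)*(b₂+s)) := by
    rw [div_lt_div_iff₀ (by positivity) (by positivity)]
    linarith [key]
  have := Real.log_lt_log (by positivity) hdiv
  rw [Real.log_div (by positivity) (by positivity), Real.log_div (by positivity) (by positivity),
    Real.log_mul p1.ne' p4.ne', Real.log_mul q1.ne' q4.ne',
    Real.log_mul p2.ne' p3.ne', Real.log_mul q2.ne' q3.ne'] at this
  linarith

/- ## Euler limit machinery -/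

private lemma log_gammaSeq (t : ℝ) (ht : 0 < t) {n : ℕ} (hn : 1 ≤ n) :
    Real.log (Real.GammaSeq t n)
      = t * Real.log n + Real.log ((n ! : ℕ) : ℝ)
        - ∑ j ∈ Finset.range (n+1), Real.log (t + j) := by
  have hnp : (0:ℝ) < n := by exact_mod_cast hn
  have hfac : (0:ℝ) < ((n ! : ℕ) : ℝ) := by exact_mod_cast n.factorial_pos
  have hprod : ∀ j ∈ Finset.range (n+1), t + (j:ℝ) ≠ 0 := by
    intro j _; positivity
  have hprodpos : (0:ℝ) < ∏ j ∈ Finset.range (n+1), (t + j) :=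
    Finset.prod_pos (fun j _ => by positivity)
  rw [Real.GammaSeq, Real.log_div (by positivity) hprodpos.ne',
    Real.log_mul (by positivity) hfac.ne', Real.log_rpow hnp,
    Real.log_prod hprod]

private lemma Fn_eq {s : ℝ} (hs : 0 < s) {t : ℝ} (ht : 0 < t) {n : ℕ} (hn : 1 ≤ n) :
    Real.log (Real.GammaSeq (t+s) n) - Real.log (Real.GammaSeq t n)
      = s * Real.log n + ∑ j ∈ Finset.range (n+1), (Real.log (t+j) - Real.log (t+s+j)) := by
  rw [log_gammaSeq (t+s) (by linarith) hn, log_gammaSeq t ht hn, Finset.sum_sub_distrib]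
  ring

private lemma tendsto_log_gammaSeq {t : ℝ} (ht : 0 < t) :
    Tendsto (fun n => Real.log (Real.GammaSeq t n)) atTop (nhds (Real.log (Real.Gamma t))) :=
  ((Real.continuousAt_log (Real.Gamma_pos_of_pos ht).ne').tendsto).comp
    (Real.GammaSeq_tendsto_Gamma t)

/-- Schur-type strict inequality for `F t = log Γ(t+s) - log Γ t`. -/
private lemma F_schur {s a₁ a₂ b₂ b₁ : ℝ} (hs : 0 < s)
    (h0 : 0 < a₁) (h12 : a₁ < a₂) (h23 : a₂ ≤ b₂) (h34 : b₂ < b₁)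
    (hsum : a₁ + b₁ = a₂ + b₂) :
    Real.log (Real.Gamma (a₁+s)) - Real.log (Real.Gamma a₁)
      + (Real.log (Real.Gamma (b₁+s)) - Real.log (Real.Gamma b₁)) <
    Real.log (Real.Gamma (a₂+s)) - Real.log (Real.Gamma a₂)
      + (Real.log (Real.Gamma (b₂+s)) - Real.log (Real.Gamma b₂)) := by
  have p2 : 0 < a₂ := lt_trans h0 h12
  have p3 : 0 < b₂ := lt_of_lt_of_le p2 h23
  have p4 : 0 < b₁ := lt_trans p3 h34
  set D := (Real.log a₂ - Real.log (a₂+s) + (Real.log b₂ - Real.log (b₂+s)))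
    - (Real.log a₁ - Real.log (a₁+s) + (Real.log b₁ - Real.log (b₁+s))) with hD
  have hDpos : 0 < D := by
    have := elem_lt hs h0 h12 h23 h34 hsum
    simp only [hD]; linarith
  have hstep : ∀ n : ℕ, 1 ≤ n →
      (Real.log (Real.GammaSeq (a₁+s) n) - Real.log (Real.GammaSeq a₁ n)
        + (Real.log (Real.GammaSeq (b₁+s) n) - Real.log (Real.GammaSeq b₁ n))) + D ≤
      Real.log (Real.GammaSeq (a₂+s) n) - Real.log (Real.GammaSeq a₂ n)
        + (Real.log (Real.GammaSeq (b₂+s) n) - Real.log (Real.GammaSeq b₂ n)) := by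
    intro n hn
    rw [Fn_eq hs h0 hn, Fn_eq hs p4 hn, Fn_eq hs p2 hn, Fn_eq hs p3 hn]
    have hsum' : ∀ j ∈ Finset.range (n+1),
        (Real.log (a₁+j) - Real.log (a₁+s+j) + (Real.log (b₁+j) - Real.log (b₁+s+j))) ≤
        (Real.log (a₂+j) - Real.log (a₂+s+j) + (Real.log (b₂+j) - Real.log (b₂+s+j))) := by
      intro j _
      exact elem_le hs (Nat.cast_nonneg j) h0 h12.le h23 h34.le hsum
    have h0mem : ∑ j ∈ Finset.range (n+1),
          ((Real.log (a₂+j) - Real.log (a₂+s+j) + (Real.log (b₂+j) - Real.log (b₂+s+j)))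
          - (Real.log (a₁+j) - Real.log (a₁+s+j) + (Real.log (b₁+j) - Real.log (b₁+s+j)))) ≥ D := by
      have hterm0 : ((Real.log (a₂+(0:ℕ)) - Real.log (a₂+s+(0:ℕ))
            + (Real.log (b₂+(0:ℕ)) - Real.log (b₂+s+(0:ℕ))))
          - (Real.log (a₁+(0:ℕ)) - Real.log (a₁+s+(0:ℕ))
            + (Real.log (b₁+(0:ℕ)) - Real.log (b₁+s+(0:ℕ))))) = D := by
        simp [hD]
      calc D = _ := hterm0.symm
        _ ≤ _ := Finset.single_le_sum (f := fun j : ℕ =>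
            ((Real.log (a₂+j) - Real.log (a₂+s+j) + (Real.log (b₂+j) - Real.log (b₂+s+j)))
            - (Real.log (a₁+j) - Real.log (a₁+s+j) + (Real.log (b₁+j) - Real.log (b₁+s+j)))))
            (fun j hj => by have h := hsum' j hj; linarith)
            (Finset.mem_range.2 (by omega))
    rw [ge_iff_le, Finset.sum_sub_distrib] at h0mem
    have e1 : ∑ j ∈ Finset.range (n+1),
        (Real.log (a₁+j) - Real.log (a₁+s+j) + (Real.log (b₁+j) - Real.log (b₁+s+j)))
      = ∑ j ∈ Finset.range (n+1), (Real.log (a₁+j) - Real.log (a₁+s+j))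
        + ∑ j ∈ Finset.range (n+1), (Real.log (b₁+j) - Real.log (b₁+s+j)) :=
      Finset.sum_add_distrib
    have e2 : ∑ j ∈ Finset.range (n+1),
        (Real.log (a₂+j) - Real.log (a₂+s+j) + (Real.log (b₂+j) - Real.log (b₂+s+j)))
      = ∑ j ∈ Finset.range (n+1), (Real.log (a₂+j) - Real.log (a₂+s+j))
        + ∑ j ∈ Finset.range (n+1), (Real.log (b₂+j) - Real.log (b₂+s+j)) :=
      Finset.sum_add_distrib
    linarith [h0mem, e1, e2]
  have T1 : Tendsto (fun n => (Real.log (Real.GammaSeq (a₁+s) n) - Real.log (Real.GammaSeq a₁ n)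
        + (Real.log (Real.GammaSeq (b₁+s) n) - Real.log (Real.GammaSeq b₁ n))) + D) atTop
      (nhds ((Real.log (Real.Gamma (a₁+s)) - Real.log (Real.Gamma a₁)
        + (Real.log (Real.Gamma (b₁+s)) - Real.log (Real.Gamma b₁))) + D)) :=
    ((((tendsto_log_gammaSeq (by linarith)).sub (tendsto_log_gammaSeq h0)).add
      ((tendsto_log_gammaSeq (by linarith)).sub (tendsto_log_gammaSeq p4))).add tendsto_const_nhds)
  have T2 : Tendsto (fun n => Real.log (Real.GammaSeq (a₂+s) n) - Real.log (Real.GammaSeq a₂ n)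
        + (Real.log (Real.GammaSeq (b₂+s) n) - Real.log (Real.GammaSeq b₂ n))) atTop
      (nhds (Real.log (Real.Gamma (a₂+s)) - Real.log (Real.Gamma a₂)
        + (Real.log (Real.Gamma (b₂+s)) - Real.log (Real.Gamma b₂)))) :=
    (((tendsto_log_gammaSeq (by linarith)).sub (tendsto_log_gammaSeq p2)).add
      ((tendsto_log_gammaSeq (by linarith)).sub (tendsto_log_gammaSeq p3)))
  have hle := le_of_tendsto_of_tendsto T1 T2
    (Filter.eventually_atTop.2 ⟨1, fun n hn => hstep n hn⟩)
  linarith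

private lemma ratio_lt {s a₁ a₂ b₂ b₁ : ℝ} (hs : 0 < s)
    (h0 : 0 < a₁) (h12 : a₁ < a₂) (h23 : a₂ ≤ b₂) (h34 : b₂ < b₁)
    (hsum : a₁ + b₁ = a₂ + b₂) :
    Real.Gamma (a₁+s) * Real.Gamma (b₁+s) / (Real.Gamma b₁ * Real.Gamma a₁) <
    Real.Gamma (a₂+s) * Real.Gamma (b₂+s) / (Real.Gamma b₂ * Real.Gamma a₂) := by
  have p2 : 0 < a₂ := lt_trans h0 h12
  have p3 : 0 < b₂ := lt_of_lt_of_le p2 h23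
  have p4 : 0 < b₁ := lt_trans p3 h34
  have g1 := Real.Gamma_pos_of_pos h0
  have g2 := Real.Gamma_pos_of_pos p2
  have g3 := Real.Gamma_pos_of_pos p3
  have g4 := Real.Gamma_pos_of_pos p4
  have g1s := Real.Gamma_pos_of_pos (show 0 < a₁ + s by linarith)
  have g2s := Real.Gamma_pos_of_pos (show 0 < a₂ + s by linarith)
  have g3s := Real.Gamma_pos_of_pos (show 0 < b₂ + s by linarith)
  have g4s := Real.Gamma_pos_of_pos (show 0 < b₁ + s by linarith)
  have hlog : Real.log (Real.Gamma (a₁+s) * Real.Gamma (b₁+s) / (Real.Gamma b₁ * Real.Gamma a₁))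
      < Real.log (Real.Gamma (a₂+s) * Real.Gamma (b₂+s) / (Real.Gamma b₂ * Real.Gamma a₂)) := by
    rw [Real.log_div (by positivity) (by positivity),
      Real.log_div (by positivity) (by positivity),
      Real.log_mul g1s.ne' g4s.ne', Real.log_mul g4.ne' g1.ne',
      Real.log_mul g2s.ne' g3s.ne', Real.log_mul g3.ne' g2.ne']
    have := F_schur hs h0 h12 h23 h34 hsum
    linarith
  exact (Real.log_lt_log_iff (by positivity) (by positivity)).1 hlog

/- ## main theorem -/

private lemma psi_eq (N : ℕ) (s : ℝ) {γ : ℝ} (hγ : γ ≠ 0) :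
    PsiNs N s γ = 2 ^ (2*s) *
      (Real.Gamma (γ/2 + s) * Real.Gamma ((((N:ℝ) - 2*s)/2 - γ/2) + s) /
        (Real.Gamma (((N:ℝ) - 2*s)/2 - γ/2) * Real.Gamma (γ/2))) := by
  rw [PsiNs, if_neg hγ, PhiNs, hardyConst,
    show (γ + 2*s)/2 = γ/2 + s by ring,
    show ((N:ℝ) - γ)/2 = (((N:ℝ) - 2*s)/2 - γ/2) + s by ring,
    show ((N:ℝ) - γ - 2*s)/2 = ((N:ℝ) - 2*s)/2 - γ/2 by ring]
  ring

/-- For `0 < s < 1`, `N > 2s`: `Ψ_{N,s} : [0,(N-2s)/2] → [0,Λ_{N,s}]` is strictly increasing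
and surjective; in particular `Ψ_{N,s}((N-2s)/2) = Λ_{N,s}` and `Ψ_{N,s}(γ) → 0` as `γ → 0⁺`. -/
theorem PsiNs_strictMono_surjective (N : ℕ) (s : ℝ) (hs0 : 0 < s) (hs1 : s < 1)
    (hN : 2 * s < (N : ℝ)) :
    StrictMonoOn (fun γ => PsiNs N s γ) (Set.Icc (0 : ℝ) (((N : ℝ) - 2 * s) / 2)) ∧
    Set.MapsTo (fun γ => PsiNs N s γ) (Set.Icc (0 : ℝ) (((N : ℝ) - 2 * s) / 2))
      (Set.Icc (0 : ℝ) (hardyConst N s)) ∧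
    Set.SurjOn (fun γ => PsiNs N s γ) (Set.Icc (0 : ℝ) (((N : ℝ) - 2 * s) / 2))
      (Set.Icc (0 : ℝ) (hardyConst N s)) ∧
    PsiNs N s (((N : ℝ) - 2 * s) / 2) = hardyConst N s ∧
    Tendsto (fun γ => PsiNs N s γ) (nhdsWithin 0 (Set.Ioi (0 : ℝ))) (nhds 0) := by
  set c : ℝ := ((N : ℝ) - 2 * s) / 2 with hc
  have hc0 : 0 < c := by rw [hc]; linarith
  have hpsi0 : PsiNs N s 0 = 0 := by rw [PsiNs, if_pos rfl]
  -- positivity of Psi on (0, c]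
  have hpsi_pos : ∀ x : ℝ, 0 < x → x ≤ c → 0 < PsiNs N s x := by
    intro x hx hxc
    rw [psi_eq N s hx.ne']
    have g1 := Real.Gamma_pos_of_pos (show 0 < x/2 + s by linarith)
    have g2 := Real.Gamma_pos_of_pos (show 0 < (c - x/2) + s by linarith)
    have g3 := Real.Gamma_pos_of_pos (show 0 < c - x/2 by linarith)
    have g4 := Real.Gamma_pos_of_pos (show 0 < x/2 by linarith)
    rw [← hc]
    positivity
  -- strict monotonicity
  have hmono : StrictMonoOn (fun γ => PsiNs N s γ) (Set.Icc (0:ℝ) c) := by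
    intro x hx y hy hxy
    have hy0 : 0 < y := lt_of_le_of_lt hx.1 hxy
    rcases eq_or_lt_of_le hx.1 with h | h
    · simp only [← h, hpsi0]
      exact hpsi_pos y hy0 hy.2
    · simp only
      rw [psi_eq N s h.ne', psi_eq N s hy0.ne', ← hc]
      refine mul_lt_mul_of_pos_left ?_ (by positivity)
      exact ratio_lt hs0 (by linarith) (by linarith)
        (by simp only [hc] at hy ⊢; linarith [hy.2]) (by linarith) (by ring)
  -- endpoint value
  have hend : PsiNs N s c = hardyConst N s := by
    rw [PsiNs, if_neg hc0.ne', PhiNs, hardyConst,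
      show (c + 2*s)/2 = ((N:ℝ) + 2*s)/4 by rw [hc]; ring,
      show ((N:ℝ) - c)/2 = ((N:ℝ) + 2*s)/4 by rw [hc]; ring,
      show ((N:ℝ) - c - 2*s)/2 = ((N:ℝ) - 2*s)/4 by rw [hc]; ring,
      show c/2 = ((N:ℝ) - 2*s)/4 by rw [hc]; ring]
    ring
  -- the auxiliary continuous function
  set h : ℝ → ℝ := fun γ => 2 ^ (2*s) *
      (Real.Gamma ((γ + 2*s)/2) * Real.Gamma (((N:ℝ) - γ)/2) /
        Real.Gamma (((N:ℝ) - γ - 2*s)/2)) * (γ / (2 * Real.Gamma (γ/2 + 1))) with hh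
  have hh0 : h 0 = 0 := by simp [hh]
  have hheq : ∀ x : ℝ, 0 < x → x ≤ c → PsiNs N s x = h x := by
    intro x hx hxc
    have hΓ : Real.Gamma (x/2 + 1) = (x/2) * Real.Gamma (x/2) :=
      Real.Gamma_add_one (by positivity)
    have hC : Real.Gamma (((N:ℝ) - x - 2*s)/2) ≠ 0 :=
      (Real.Gamma_pos_of_pos (show 0 < ((N:ℝ) - x - 2*s)/2 by
        rw [hc] at hxc; linarith)).ne'
    have hD : Real.Gamma (x/2) ≠ 0 := (Real.Gamma_pos_of_pos (by positivity)).ne'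
    rw [PsiNs, if_neg hx.ne', PhiNs, hardyConst, hh]
    simp only
    rw [hΓ]
    field_simp
    ring
  -- continuity of h on [0, c]
  have hcont : ∀ x : ℝ, 0 ≤ x → x ≤ c → ContinuousAt h x := by
    intro x hx0 hxc
    have gammaCont : ∀ y : ℝ, 0 < y → ContinuousAt Real.Gamma y := fun y hy =>
      (Real.differentiableAt_Gamma (fun m => by
        have : (0:ℝ) ≤ m := Nat.cast_nonneg m
        exact ne_of_gt (by linarith))).continuousAt
    have hxcN : x < (N:ℝ) - 2*s := by rw [hc] at hxc; linarith
    have hf1 : ContinuousAt (fun γ : ℝ => (γ + 2*s)/2) x := by fun_prop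
    have hf2 : ContinuousAt (fun γ : ℝ => ((N:ℝ) - γ)/2) x := by fun_prop
    have hf3 : ContinuousAt (fun γ : ℝ => ((N:ℝ) - γ - 2*s)/2) x := by fun_prop
    have hf4 : ContinuousAt (fun γ : ℝ => γ/2 + 1) x := by fun_prop
    have hg1 : ContinuousAt Real.Gamma ((x + 2*s)/2) := gammaCont _ (by linarith)
    have hg2 : ContinuousAt Real.Gamma (((N:ℝ) - x)/2) := gammaCont _ (by linarith)
    have hg3 : ContinuousAt Real.Gamma (((N:ℝ) - x - 2*s)/2) := gammaCont _ (by linarith)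
    have hg4 : ContinuousAt Real.Gamma (x/2 + 1) := gammaCont _ (by positivity)
    have c1 : ContinuousAt (fun γ : ℝ => Real.Gamma ((γ + 2*s)/2)) x := hg1.tendsto.comp hf1
    have c2 : ContinuousAt (fun γ : ℝ => Real.Gamma (((N:ℝ) - γ)/2)) x := hg2.tendsto.comp hf2
    have c3 : ContinuousAt (fun γ : ℝ => Real.Gamma (((N:ℝ) - γ - 2*s)/2)) x := hg3.tendsto.comp hf3
    have c4 : ContinuousAt (fun γ : ℝ => Real.Gamma (γ/2 + 1)) x := hg4.tendsto.comp hf4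
    have hC : Real.Gamma (((N:ℝ) - x - 2*s)/2) ≠ 0 :=
      (Real.Gamma_pos_of_pos (by linarith)).ne'
    have hD : (2 : ℝ) * Real.Gamma (x/2 + 1) ≠ 0 := by
      have := Real.Gamma_pos_of_pos (show 0 < x/2 + 1 by positivity)
      positivity
    rw [hh]
    exact ((continuousAt_const.mul ((c1.mul c2).div c3 hC)).mul
      (continuousAt_id.div (continuousAt_const.mul c4) hD))
  -- Psi agrees with h on [0, c]
  have hEqOn : Set.EqOn (fun γ => PsiNs N s γ) h (Set.Icc (0:ℝ) c) := by
    intro x hx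
    rcases eq_or_lt_of_le hx.1 with hx0 | hx0
    · simp only [← hx0, hpsi0, hh0]
    · exact hheq x hx0 hx.2
  have hContOn : ContinuousOn (fun γ => PsiNs N s γ) (Set.Icc (0:ℝ) c) :=
    ContinuousOn.congr (fun x hx => (hcont x hx.1 hx.2).continuousWithinAt) hEqOn
  refine ⟨hmono, ?_, ?_, hend, ?_⟩
  · -- MapsTo
    intro x hx
    have hΛ0 : 0 ≤ hardyConst N s := by rw [← hend]; exact (hpsi_pos c hc0 le_rfl).le
    simp only [Set.mem_Icc]
    rcases eq_or_lt_of_le hx.1 with hx0 | hx0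
    · rw [← hx0]
      simp [hpsi0, hΛ0]
    · refine ⟨(hpsi_pos x hx0 hx.2).le, ?_⟩
      rcases eq_or_lt_of_le hx.2 with hxc | hxc
      · rw [hxc]
        exact le_of_eq hend
      · rw [← hend]
        exact (hmono hx (Set.right_mem_Icc.2 hc0.le) hxc).le
  · -- SurjOn
    have := intermediate_value_Icc hc0.le hContOn
    simp only [hpsi0, hend] at this
    exact this
  · -- Tendsto at 0+
    have hmem : Set.Ioo (0:ℝ) c ∈ nhdsWithin (0:ℝ) (Set.Ioi (0:ℝ)) :=
      Ioo_mem_nhdsGT_of_mem ⟨le_refl 0, hc0⟩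
    have hev : (fun γ => PsiNs N s γ) =ᶠ[nhdsWithin (0:ℝ) (Set.Ioi (0:ℝ))] h := by
      filter_upwards [hmem] with x hx
      exact hheq x hx.1 hx.2.le
    have hth : Tendsto h (nhdsWithin (0:ℝ) (Set.Ioi (0:ℝ))) (nhds (h 0)) :=
      ((hcont 0 le_rfl hc0.le).tendsto).mono_left nhdsWithin_le_nhds
    rw [hh0] at hth
    exact Tendsto.congr' hev.symm hth


end
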